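/- Let T be a closed densely defined operator on a Hilbert space H. Then (1+T*T)^{-1/2} is a unitary operator from H onto dom T equipped with the graph inner product, and consequently the bounded transform T(1+T*T)^{-1/2} is a bounded operator on H with norm at most 1. -/

import Mathlib

open scoped InnerProductSpace
open Filter

/-- Weak characterization of the resolvent `(mu + T*T)⁻¹` of a closed densely
defined operator `T`: `R x` lies in `dom T` and satisfies
`⟪T (R x), T y⟫ + mu ⟪R x, y⟫ = ⟪x, y⟫` for all `y ∈ dom T`. -/
def IsResolvent {E F : Type*} [NormedAddCommGroup E] [InnerProductSpace ℂ E]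
    [NormedAddCommGroup F] [InnerProductSpace ℂ F]
    (T : E →ₗ.[ℂ] F) (mu : ℝ) (R : E →L[ℂ] E) : Prop :=
  ∀ x : E, ∃ h : R x ∈ T.domain,
    ∀ y : T.domain, ⟪T ⟨R x, h⟩, T y⟫_ℂ + (mu : ℂ) * ⟪R x, (y : E)⟫_ℂ = ⟪x, (y : E)⟫_ℂ

/-- `R` is the positive square root `(mu + T*T)^(-1/2)` of the resolvent:
`R` is self-adjoint, nonnegative, and `R * R` is the resolvent `(mu + T*T)⁻¹`. -/
def IsSqrtResolvent {E F : Type*} [NormedAddCommGroup E] [InnerProductSpace ℂ E]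
    [NormedAddCommGroup F] [InnerProductSpace ℂ F]
    (T : E →ₗ.[ℂ] F) (mu : ℝ) (R : E →L[ℂ] E) : Prop :=
  (∀ x y : E, ⟪R x, y⟫_ℂ = ⟪x, R y⟫_ℂ) ∧ (∀ x : E, 0 ≤ (⟪R x, x⟫_ℂ).re) ∧
    IsResolvent T mu (R * R)

/-- For a closed densely defined operator `T` on a Hilbert space `H`,
the operator `(1+T*T)^(-1/2)` is a unitary from `H` onto `dom T` with the graph inner
product; consequently the bounded transform `T(1+T*T)^(-1/2)` is bounded with norm `≤ 1`. -/
theorem statement_0 {H : Type*} [NormedAddCommGroup H] [InnerProductSpace ℂ H]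
    [CompleteSpace H] (T : H →ₗ.[ℂ] H)
    (hdense : Dense (T.domain : Set H)) (hclosed : IsClosed (T.graph : Set (H × H)))
    (R : H →L[ℂ] H) (hR : IsSqrtResolvent T 1 R) :
    ∃ hmem : ∀ x : H, R x ∈ T.domain,
      (∀ x y : H,
        ⟪R x, R y⟫_ℂ + ⟪T ⟨R x, hmem x⟩, T ⟨R y, hmem y⟩⟫_ℂ = ⟪x, y⟫_ℂ) ∧
      Function.Surjective (fun x : H => (⟨R x, hmem x⟩ : T.domain)) ∧
      (∀ x : H, ‖T ⟨R x, hmem x⟩‖ ≤ ‖x‖) := by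
  obtain ⟨hsa, hpos, hres⟩ := hR
  have hQmem : ∀ x : H, R (R x) ∈ T.domain := fun x => (hres x).choose
  have hQeq : ∀ (x : H) (y : T.domain),
      ⟪T ⟨R (R x), hQmem x⟩, T y⟫_ℂ + ⟪R (R x), (y : H)⟫_ℂ = ⟪x, (y : H)⟫_ℂ := by
    intro x y
    have h := (hres x).choose_spec y
    simpa using h
  have hRR : ∀ x y : H, ⟪x, R (R y)⟫_ℂ = ⟪R x, R y⟫_ℂ := fun x y => (hsa x (R y)).symm
  have hT0 : ∀ h : (0 : H) ∈ T.domain, T ⟨0, h⟩ = 0 := by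
    intro h
    have h0 : (⟨0, h⟩ : T.domain) = 0 := rfl
    rw [h0, T.map_zero]
  have hTsub : ∀ (a b : H) (ha : a ∈ T.domain) (hb : b ∈ T.domain),
      T ⟨a - b, sub_mem ha hb⟩ = T ⟨a, ha⟩ - T ⟨b, hb⟩ := by
    intro a b ha hb
    have h0 : (⟨a - b, sub_mem ha hb⟩ : T.domain) = ⟨a, ha⟩ - ⟨b, hb⟩ := rfl
    rw [h0, T.map_sub]
  have hkey : ∀ x y : H,
      ⟪T ⟨R (R x), hQmem x⟩, T ⟨R (R y), hQmem y⟩⟫_ℂ + ⟪R (R x), R (R y)⟫_ℂ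
        = ⟪R x, R y⟫_ℂ := by
    intro x y
    have h := hQeq x ⟨R (R y), hQmem y⟩
    rwa [hRR x y] at h
  have hperp : ∀ z : H, (∀ w : T.domain, ⟪z, (w : H)⟫_ℂ = 0) → z = 0 := by
    intro z hz
    have hcont : Continuous fun w : H => ⟪z, w⟫_ℂ := continuous_const.inner continuous_id
    have hall : (fun w : H => ⟪z, w⟫_ℂ) = fun _ => (0 : ℂ) :=
      Continuous.ext_on hdense hcont continuous_const (fun w hw => hz ⟨w, hw⟩)
    have : ⟪z, z⟫_ℂ = 0 := congrFun hall z
    simpa using inner_self_eq_zero.mp this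
  have hker : ∀ z : H, R z = 0 → z = 0 := by
    intro z hz
    have hQz : R (R z) = 0 := by rw [hz, map_zero]
    refine hperp z fun w => ?_
    have h := hQeq z w
    have h0 : T ⟨R (R z), hQmem z⟩ = 0 := by
      have he : (⟨R (R z), hQmem z⟩ : T.domain) = ⟨0, hQz ▸ hQmem z⟩ := Subtype.ext hQz
      rw [he, hT0]
    rw [h0, hQz] at h
    simpa using h.symm
  have hdr : Dense (Set.range R : Set H) := by
    have horth : (LinearMap.range (R : H →ₗ[ℂ] H))ᗮ = ⊥ := by
      rw [Submodule.eq_bot_iff]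
      intro z hz
      have hz' : ∀ y : H, ⟪y, R z⟫_ℂ = 0 := by
        intro y
        rw [← hsa]
        exact (Submodule.mem_orthogonal _ z).mp hz _ (LinearMap.mem_range_self _ y)
      have hRz : R z = 0 := inner_self_eq_zero.mp (hz' (R z))
      exact hker z hRz
    have htop := (Submodule.topologicalClosure_eq_top_iff
      (K := LinearMap.range (R : H →ₗ[ℂ] H))).mpr horth
    have hd : Dense ((LinearMap.range (R : H →ₗ[ℂ] H) : Submodule ℂ H) : Set H) :=
      Submodule.dense_iff_topologicalClosure_eq_top.mpr htop
    simpa [LinearMap.coe_range] using hd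
  have hTR2 : ∀ a b : H, T ⟨R (R a), hQmem a⟩ - T ⟨R (R b), hQmem b⟩
      = T ⟨R (R (a - b)), hQmem (a - b)⟩ := by
    intro a b
    rw [← hTsub _ _ (hQmem a) (hQmem b)]
    congr 1
    exact Subtype.ext (by simp)
  have hTQ_le : ∀ a : H, ‖T ⟨R (R a), hQmem a⟩‖ ≤ ‖R a‖ := by
    intro a
    have h := congrArg Complex.re (hkey a a)
    simp only [Complex.add_re] at h
    have e1 : (⟪T ⟨R (R a), hQmem a⟩, T ⟨R (R a), hQmem a⟩⟫_ℂ).re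
        = ‖T ⟨R (R a), hQmem a⟩‖ ^ 2 := inner_self_eq_norm_sq (𝕜 := ℂ) _
    have e2 : (⟪R (R a), R (R a)⟫_ℂ).re = ‖R (R a)‖ ^ 2 := inner_self_eq_norm_sq (𝕜 := ℂ) _
    have e3 : (⟪R a, R a⟫_ℂ).re = ‖R a‖ ^ 2 := inner_self_eq_norm_sq (𝕜 := ℂ) _
    rw [e1, e2, e3] at h
    nlinarith [norm_nonneg (T ⟨R (R a), hQmem a⟩), norm_nonneg (R a),
      sq_nonneg ‖R (R a)‖]
  have key : ∀ x : H, ∃ h : R x ∈ T.domain, ∃ y : ℕ → H,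
      Tendsto (fun n => R (y n)) atTop (nhds x) ∧
      Tendsto (fun n => T ⟨R (R (y n)), hQmem (y n)⟩) atTop (nhds (T ⟨R x, h⟩)) := by
    intro x
    obtain ⟨u, humem, hulim⟩ := mem_closure_iff_seq_limit.mp (hdr x)
    choose y hy using humem
    have hylim : Tendsto (fun n => R (y n)) atTop (nhds x) := by
      have : (fun n => R (y n)) = u := funext hy
      rw [this]; exact hulim
    have hgC : CauchySeq (fun n => T ⟨R (R (y n)), hQmem (y n)⟩) := by
      rw [Metric.cauchySeq_iff]
      intro ε hε
      obtain ⟨N, hN⟩ := Metric.cauchySeq_iff.mp hylim.cauchySeq ε hε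
      refine ⟨N, fun m hm n hn => lt_of_le_of_lt ?_ (hN m hm n hn)⟩
      rw [dist_eq_norm, dist_eq_norm, hTR2]
      calc ‖T ⟨R (R (y m - y n)), hQmem (y m - y n)⟩‖ ≤ ‖R (y m - y n)‖ := hTQ_le _
        _ = ‖R (y m) - R (y n)‖ := by rw [map_sub]
    obtain ⟨z, hz⟩ := cauchySeq_tendsto_of_complete hgC
    have hfst : Tendsto (fun n => R (R (y n))) atTop (nhds (R x)) :=
      (R.continuous.tendsto x).comp hylim
    have hpt : Tendsto (fun n => (R (R (y n)), T ⟨R (R (y n)), hQmem (y n)⟩))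
        atTop (nhds (R x, z)) := hfst.prodMk_nhds hz
    have hmemg : (R x, z) ∈ T.graph := by
      refine hclosed.mem_of_tendsto hpt (Filter.Eventually.of_forall fun n => ?_)
      exact T.mem_graph ⟨R (R (y n)), hQmem (y n)⟩
    obtain ⟨v, hv1, hv2⟩ := T.mem_graph_iff.mp hmemg
    have hv1' : (v : H) = R x := hv1
    have h : R x ∈ T.domain := hv1' ▸ v.2
    refine ⟨h, y, hylim, ?_⟩
    have hveq : (⟨R x, h⟩ : T.domain) = v := Subtype.ext hv1'.symm
    rw [hveq, hv2]
    exact hz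
  choose hmem y hylim hTlim using key
  have hid : ∀ a b : H,
      ⟪R a, R b⟫_ℂ + ⟪T ⟨R a, hmem a⟩, T ⟨R b, hmem b⟩⟫_ℂ = ⟪a, b⟫_ℂ := by
    intro a b
    have h1 : Tendsto (fun n => ⟪R (y a n), R (y b n)⟫_ℂ) atTop (nhds ⟪a, b⟫_ℂ) :=
      (hylim a).inner (hylim b)
    have hfa : Tendsto (fun n => R (R (y a n))) atTop (nhds (R a)) :=
      (R.continuous.tendsto a).comp (hylim a)
    have hfb : Tendsto (fun n => R (R (y b n))) atTop (nhds (R b)) :=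
      (R.continuous.tendsto b).comp (hylim b)
    have h2 : Tendsto (fun n =>
        ⟪T ⟨R (R (y a n)), hQmem (y a n)⟩, T ⟨R (R (y b n)), hQmem (y b n)⟩⟫_ℂ
          + ⟪R (R (y a n)), R (R (y b n))⟫_ℂ) atTop
        (nhds (⟪T ⟨R a, hmem a⟩, T ⟨R b, hmem b⟩⟫_ℂ + ⟪R a, R b⟫_ℂ)) :=
      ((hTlim a).inner (hTlim b)).add (hfa.inner hfb)
    have h3 : (fun n =>
        ⟪T ⟨R (R (y a n)), hQmem (y a n)⟩, T ⟨R (R (y b n)), hQmem (y b n)⟩⟫_ℂ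
          + ⟪R (R (y a n)), R (R (y b n))⟫_ℂ)
        = fun n => ⟪R (y a n), R (y b n)⟫_ℂ := funext fun n => hkey (y a n) (y b n)
    rw [h3] at h2
    have := tendsto_nhds_unique h2 h1
    rw [add_comm] at this
    exact this
  refine ⟨hmem, hid, ?_, ?_⟩
  · -- surjectivity
    have hTadd : ∀ (a b : H) (ha : a ∈ T.domain) (hb : b ∈ T.domain),
        T ⟨a + b, add_mem ha hb⟩ = T ⟨a, ha⟩ + T ⟨b, hb⟩ := by
      intro a b ha hb
      have h0 : (⟨a + b, add_mem ha hb⟩ : T.domain) = ⟨a, ha⟩ + ⟨b, hb⟩ := rfl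
      rw [h0, T.map_add]
    have hTsmul : ∀ (c : ℂ) (a : H) (ha : a ∈ T.domain),
        T ⟨c • a, Submodule.smul_mem _ c ha⟩ = c • T ⟨a, ha⟩ := by
      intro c a ha
      have h0 : (⟨c • a, Submodule.smul_mem _ c ha⟩ : T.domain) = c • ⟨a, ha⟩ := rfl
      rw [h0, T.map_smul]
    set S : H →ₗ[ℂ] H :=
      { toFun := fun x => T ⟨R x, hmem x⟩
        map_add' := fun a b => by
          have h1 : (⟨R (a + b), hmem (a + b)⟩ : T.domain)
              = ⟨R a + R b, add_mem (hmem a) (hmem b)⟩ := Subtype.ext (by simp)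
          show (T ⟨R (a + b), hmem (a + b)⟩ : H)
            = T ⟨R a, hmem a⟩ + T ⟨R b, hmem b⟩
          rw [h1, hTadd]
        map_smul' := fun c a => by
          have h1 : (⟨R (c • a), hmem (c • a)⟩ : T.domain)
              = ⟨c • R a, Submodule.smul_mem _ c (hmem a)⟩ := Subtype.ext (by simp)
          show (T ⟨R (c • a), hmem (c • a)⟩ : H) = c • T ⟨R a, hmem a⟩
          rw [h1, hTsmul] } with hS
    set L0 : H →ₗ[ℂ] WithLp 2 (H × H) :=
      (WithLp.linearEquiv 2 ℂ (H × H)).symm.toLinearMap.comp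
        ((R : H →ₗ[ℂ] H).prod S) with hL0
    have hL0fst : ∀ x : H, (L0 x).fst = R x := fun _ => rfl
    have hL0snd : ∀ x : H, (L0 x).snd = T ⟨R x, hmem x⟩ := fun _ => rfl
    have hL0norm : ∀ x : H, ‖L0 x‖ = ‖x‖ := by
      intro x
      have h1 : ‖L0 x‖ ^ 2 = ‖R x‖ ^ 2 + ‖T ⟨R x, hmem x⟩‖ ^ 2 := by
        rw [WithLp.prod_norm_sq_eq_of_L2, hL0fst, hL0snd]
      have h := congrArg Complex.re (hid x x)
      simp only [Complex.add_re] at h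
      have e1 : (⟪T ⟨R x, hmem x⟩, T ⟨R x, hmem x⟩⟫_ℂ).re
          = ‖T ⟨R x, hmem x⟩‖ ^ 2 := inner_self_eq_norm_sq (𝕜 := ℂ) _
      have e2 : (⟪R x, R x⟫_ℂ).re = ‖R x‖ ^ 2 := inner_self_eq_norm_sq (𝕜 := ℂ) _
      have e3 : (⟪x, x⟫_ℂ).re = ‖x‖ ^ 2 := inner_self_eq_norm_sq (𝕜 := ℂ) _
      rw [e1, e2, e3] at h
      have h2 : ‖L0 x‖ ^ 2 = ‖x‖ ^ 2 := by rw [h1, h]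
      rw [← Real.sqrt_sq (norm_nonneg (L0 x)), ← Real.sqrt_sq (norm_nonneg x), h2]
    have hiso : Isometry L0 := AddMonoidHomClass.isometry_of_norm L0 hL0norm
    set K : Submodule ℂ (WithLp 2 (H × H)) := LinearMap.range L0 with hK
    have hKclosed : IsClosed (K : Set (WithLp 2 (H × H))) := by
      rw [hK, LinearMap.coe_range]
      exact hiso.isClosedEmbedding.isClosed_range
    haveI : CompleteSpace K := hKclosed.completeSpace_coe
    intro u
    set p : WithLp 2 (H × H) := (WithLp.equiv 2 (H × H)).symm ((u : H), T u) with hp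
    set q : K := K.orthogonalProjection p with hq
    have hdperp : p - (q : WithLp 2 (H × H)) ∈ Kᗮ :=
      K.sub_starProjection_mem_orthogonal p
    obtain ⟨w, hw⟩ := LinearMap.mem_range.mp q.2
    have hd1 : (p - (q : WithLp 2 (H × H))).fst = (u : H) - R w := by
      rw [← hw]; rfl
    have hd2 : (p - (q : WithLp 2 (H × H))).snd = T u - T ⟨R w, hmem w⟩ := by
      rw [← hw]; rfl
    have hd1mem : (u : H) - R w ∈ T.domain := sub_mem u.2 (hmem w)
    have hd2' : (p - (q : WithLp 2 (H × H))).snd = T ⟨(u : H) - R w, hd1mem⟩ := by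
      rw [hd2, hTsub _ _ u.2 (hmem w)]
    have hzero : ∀ a : H, ⟪a, (u : H) - R w⟫_ℂ = 0 := by
      intro a
      have hv : L0 (R a) ∈ K := LinearMap.mem_range_self _ _
      have h0 : ⟪L0 (R a), p - (q : WithLp 2 (H × H))⟫_ℂ = 0 :=
        (Submodule.mem_orthogonal _ _).mp hdperp _ hv
      rw [WithLp.prod_inner_apply, WithLp.ofLp_fst, WithLp.ofLp_fst, WithLp.ofLp_snd, WithLp.ofLp_snd, hL0fst, hL0snd, hd1, hd2'] at h0
      have h1 := hQeq a ⟨(u : H) - R w, hd1mem⟩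
      have h2 : ⟪T ⟨R (R a), hQmem a⟩, T ⟨(u : H) - R w, hd1mem⟩⟫_ℂ
          = ⟪T ⟨R (R a), hmem (R a)⟩, T ⟨(u : H) - R w, hd1mem⟩⟫_ℂ := rfl
      rw [h2] at h1
      rw [← h1]
      rw [add_comm] at h0
      exact h0
    have huRw : (u : H) - R w = 0 := by
      have := hzero ((u : H) - R w)
      have h0 : ⟪(u : H) - R w, (u : H) - R w⟫_ℂ = 0 := this
      simpa using inner_self_eq_zero.mp h0
    exact ⟨w, Subtype.ext (by simpa using (sub_eq_zero.mp huRw).symm)⟩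
  · intro x
    have h := congrArg Complex.re (hid x x)
    simp only [Complex.add_re] at h
    have e1 : (⟪T ⟨R x, hmem x⟩, T ⟨R x, hmem x⟩⟫_ℂ).re
        = ‖T ⟨R x, hmem x⟩‖ ^ 2 := inner_self_eq_norm_sq (𝕜 := ℂ) _
    have e2 : (⟪R x, R x⟫_ℂ).re = ‖R x‖ ^ 2 := inner_self_eq_norm_sq (𝕜 := ℂ) _
    have e3 : (⟪x, x⟫_ℂ).re = ‖x‖ ^ 2 := inner_self_eq_norm_sq (𝕜 := ℂ) _
    rw [e1, e2, e3] at h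
    nlinarith [norm_nonneg (T ⟨R x, hmem x⟩), norm_nonneg x, sq_nonneg ‖R x‖]
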